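/- Let (X,d) be a metric space, f any unbounded modulus function, (A_k) a sequence in CL(X) and A ∈ CL(X). If (A_k) is Wijsman f-strong Cesàro convergent to A, then (A_k) is Wijsman f-statistically convergent to A and (A_k) is Wijsman uniformly integrable. -/
import Mathlib


open Filter Metric Set

/-- `f : ℝ → ℝ` is an (unbounded) modulus function (considered on `[0,∞)`):
`f x = 0 ↔ x = 0`, subadditive, increasing, continuous from the right at `0`,
and unbounded. -/
def IsModulus (f : ℝ → ℝ) : Prop :=
  (∀ x ∈ Set.Ici (0:ℝ), 0 ≤ f x) ∧
  (∀ x ∈ Set.Ici (0:ℝ), (f x = 0 ↔ x = 0)) ∧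
  (∀ x ∈ Set.Ici (0:ℝ), ∀ y ∈ Set.Ici (0:ℝ), f (x + y) ≤ f x + f y) ∧
  MonotoneOn f (Set.Ici (0:ℝ)) ∧
  ContinuousWithinAt f (Set.Ici (0:ℝ)) 0 ∧
  (∀ M : ℝ, ∃ x ∈ Set.Ici (0:ℝ), M < f x)

/-- `φ(ε) = limsup_n f(nε)/f(n)`. -/
noncomputable def modPhi (f : ℝ → ℝ) (ε : ℝ) : ℝ :=
  Filter.limsup (fun n : ℕ => f ((n : ℝ) * ε) / f (n : ℝ)) Filter.atTop

/-- A modulus function is compatible if `φ(ε) → 0` as `ε → 0⁺`. -/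
def Compatible (f : ℝ → ℝ) : Prop :=
  Filter.Tendsto (modPhi f) (nhdsWithin 0 (Set.Ioi 0)) (nhds 0)

/-- Wijsman statistical convergence of a sequence of subsets of a metric space. -/
def WijsmanStatConv {X : Type*} [MetricSpace X] (A : ℕ → Set X) (B : Set X) : Prop :=
  ∀ x : X, ∀ ε > (0:ℝ),
    Filter.Tendsto (fun n : ℕ =>
      (((Finset.range n).filter
        (fun j => ε < |infDist x (A j) - infDist x B|)).card : ℝ) / (n : ℝ))
      Filter.atTop (nhds 0)

/-- Wijsman `f`-statistical convergence of a sequence of subsets of a metric space. -/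
def WijsmanFStatConv {X : Type*} [MetricSpace X] (f : ℝ → ℝ) (A : ℕ → Set X)
    (B : Set X) : Prop :=
  ∀ x : X, ∀ ε > (0:ℝ),
    Filter.Tendsto (fun n : ℕ =>
      f ((((Finset.range n).filter
        (fun j => ε < |infDist x (A j) - infDist x B|)).card : ℝ)) / f (n : ℝ))
      Filter.atTop (nhds 0)

/-- A real sequence is `f`-strong Cesàro convergent to `L`. -/
def FStrongCesaro (f : ℝ → ℝ) (x : ℕ → ℝ) (L : ℝ) : Prop :=
  Filter.Tendsto (fun n : ℕ =>
    f (∑ j ∈ Finset.range n, |x j - L|) / f (n : ℝ)) Filter.atTop (nhds 0)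

/-- Wijsman `f`-strong Cesàro convergence. -/
def WijsmanFStrongCesaro {X : Type*} [MetricSpace X] (f : ℝ → ℝ) (A : ℕ → Set X)
    (B : Set X) : Prop :=
  ∀ x : X, FStrongCesaro f (fun j => infDist x (A j)) (infDist x B)

/-- Wijsman strong Cesàro convergence (the case `f = id`). -/
def WijsmanStrongCesaro {X : Type*} [MetricSpace X] (A : ℕ → Set X) (B : Set X) : Prop :=
  ∀ x : X,
    Filter.Tendsto (fun n : ℕ =>
      (∑ j ∈ Finset.range n, |infDist x (A j) - infDist x B|) / (n : ℝ))
      Filter.atTop (nhds 0)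

/-- A real sequence is uniformly integrable. -/
def UnifIntegrable (x : ℕ → ℝ) : Prop :=
  Filter.Tendsto (fun c : ℝ =>
    ⨆ n : ℕ, (∑ j ∈ Finset.range n, if c ≤ |x j| then |x j| else 0) / (n : ℝ))
    Filter.atTop (nhds 0)

/-- Wijsman uniform integrability. -/
def WijsmanUnifIntegrable {X : Type*} [MetricSpace X] (A : ℕ → Set X) : Prop :=
  ∀ x : X, UnifIntegrable (fun j => infDist x (A j))

/-- A lacunary sequence: strictly increasing, starting at `0`,
with gaps `h_r = k_{r+1} - k_r → ∞`. -/
def IsLacunary (k : ℕ → ℕ) : Prop :=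
  k 0 = 0 ∧ StrictMono k ∧
    Filter.Tendsto (fun r : ℕ => k (r + 1) - k r) Filter.atTop Filter.atTop

/-- The gaps `h_r` of a lacunary sequence. -/
def lacH (k : ℕ → ℕ) (r : ℕ) : ℕ := k (r + 1) - k r

/-- The blocks `I_r = (k_r, k_{r+1}]` of a lacunary sequence. -/
def lacI (k : ℕ → ℕ) (r : ℕ) : Finset ℕ := Finset.Ioc (k r) (k (r + 1))

/-- `φ_θ(ε) = limsup_t f(h_t ε)/f(h_t)`. -/
noncomputable def modPhiTheta (f : ℝ → ℝ) (k : ℕ → ℕ) (ε : ℝ) : ℝ :=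
  Filter.limsup (fun t : ℕ => f ((lacH k t : ℝ) * ε) / f ((lacH k t : ℝ))) Filter.atTop

/-- `f` is `θ`-compatible if `φ_θ(ε) → 0` as `ε → 0⁺`. -/
def ThetaCompatible (f : ℝ → ℝ) (k : ℕ → ℕ) : Prop :=
  Filter.Tendsto (modPhiTheta f k) (nhdsWithin 0 (Set.Ioi 0)) (nhds 0)

/-- Wijsman `θ`-lacunary statistical convergence. -/
def WijsmanLacStatConv {X : Type*} [MetricSpace X] (k : ℕ → ℕ) (A : ℕ → Set X)
    (B : Set X) : Prop :=
  ∀ x : X, ∀ ε > (0:ℝ),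
    Filter.Tendsto (fun r : ℕ =>
      (((lacI k r).filter
        (fun j => ε < |infDist x (A j) - infDist x B|)).card : ℝ) / (lacH k r : ℝ))
      Filter.atTop (nhds 0)

/-- Wijsman `θ`-lacunary `f`-statistical convergence. -/
def WijsmanLacFStatConv {X : Type*} [MetricSpace X] (f : ℝ → ℝ) (k : ℕ → ℕ)
    (A : ℕ → Set X) (B : Set X) : Prop :=
  ∀ x : X, ∀ ε > (0:ℝ),
    Filter.Tendsto (fun r : ℕ =>
      f ((((lacI k r).filter
        (fun j => ε < |infDist x (A j) - infDist x B|)).card : ℝ)) / f ((lacH k r : ℝ)))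
      Filter.atTop (nhds 0)

/-- Wijsman `θ`-lacunary `f`-strong Cesàro convergence. -/
def WijsmanLacFStrongCesaro {X : Type*} [MetricSpace X] (f : ℝ → ℝ) (k : ℕ → ℕ)
    (A : ℕ → Set X) (B : Set X) : Prop :=
  ∀ x : X,
    Filter.Tendsto (fun r : ℕ =>
      f (∑ j ∈ lacI k r, |infDist x (A j) - infDist x B|) / f ((lacH k r : ℝ)))
      Filter.atTop (nhds 0)

/-- Wijsman `θ`-lacunary strong Cesàro convergence (the case `f = id`). -/
def WijsmanLacStrongCesaro {X : Type*} [MetricSpace X] (k : ℕ → ℕ)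
    (A : ℕ → Set X) (B : Set X) : Prop :=
  ∀ x : X,
    Filter.Tendsto (fun r : ℕ =>
      (∑ j ∈ lacI k r, |infDist x (A j) - infDist x B|) / (lacH k r : ℝ))
      Filter.atTop (nhds 0)

/-- A real sequence is `θ`-lacunary uniformly integrable. -/
def LacUnifIntegrable (k : ℕ → ℕ) (x : ℕ → ℝ) : Prop :=
  Filter.Tendsto (fun M : ℝ =>
    ⨆ t : ℕ, (∑ j ∈ lacI k t, if M ≤ |x j| then |x j| else 0) / (lacH k t : ℝ))
    Filter.atTop (nhds 0)

/-- Wijsman `θ`-lacunary uniform integrability. -/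
def WijsmanLacUnifIntegrable {X : Type*} [MetricSpace X] (k : ℕ → ℕ)
    (A : ℕ → Set X) : Prop :=
  ∀ x : X, LacUnifIntegrable k (fun j => infDist x (A j))

lemma mod_zero' {f : ℝ → ℝ} (hf : IsModulus f) : f 0 = 0 :=
  (hf.2.1 0 Set.self_mem_Ici).mpr rfl

lemma mod_nonneg' {f : ℝ → ℝ} (hf : IsModulus f) {x : ℝ} (hx : 0 ≤ x) : 0 ≤ f x :=
  hf.1 x (Set.mem_Ici.mpr hx)

lemma mod_pos' {f : ℝ → ℝ} (hf : IsModulus f) {x : ℝ} (hx : 0 < x) : 0 < f x := by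
  rcases lt_or_eq_of_le (mod_nonneg' hf hx.le) with h | h
  · exact h
  · exact absurd (((hf.2.1 x (Set.mem_Ici.mpr hx.le)).mp h.symm)) hx.ne'

lemma mod_mono' {f : ℝ → ℝ} (hf : IsModulus f) {x y : ℝ} (hx : 0 ≤ x) (hxy : x ≤ y) :
    f x ≤ f y :=
  hf.2.2.2.1 (Set.mem_Ici.mpr hx) (Set.mem_Ici.mpr (hx.trans hxy)) hxy

lemma mod_nsmul' {f : ℝ → ℝ} (hf : IsModulus f) (k : ℕ) {x : ℝ} (hx : 0 ≤ x) :
    f ((k : ℝ) * x) ≤ (k : ℝ) * f x := by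
  induction k with
  | zero => simp [mod_zero' hf]
  | succ n ih =>
    have h1 : ((n + 1 : ℕ) : ℝ) * x = (n : ℝ) * x + x := by push_cast; ring
    rw [h1]
    calc f ((n : ℝ) * x + x) ≤ f ((n : ℝ) * x) + f x :=
          hf.2.2.1 _ (Set.mem_Ici.mpr (by positivity)) x (Set.mem_Ici.mpr hx)
      _ ≤ (n : ℝ) * f x + f x := by linarith
      _ = ((n + 1 : ℕ) : ℝ) * f x := by push_cast; ring

/-- If `f(S n)/f(n) → 0` for a nonnegative sequence `S`, then `S n / n → 0`. -/
lemma mod_cesaro_div {f : ℝ → ℝ} (hf : IsModulus f) {S : ℕ → ℝ} (hS : ∀ n, 0 ≤ S n)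
    (h : Filter.Tendsto (fun n : ℕ => f (S n) / f (n : ℝ)) Filter.atTop (nhds 0)) :
    Filter.Tendsto (fun n : ℕ => S n / (n : ℝ)) Filter.atTop (nhds 0) := by
  rw [Metric.tendsto_atTop] at h ⊢
  intro ε hε
  set m : ℕ := ⌈1 / ε⌉₊ with hm
  have hm0 : (0 : ℝ) < m := by
    have : 0 < m := Nat.ceil_pos.mpr (show (0:ℝ) < 1 / ε by positivity)
    exact_mod_cast this
  have hmε : 1 / ε ≤ (m : ℝ) := Nat.le_ceil _
  obtain ⟨N, hN⟩ := h ((m : ℝ)⁻¹) (by positivity)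
  refine ⟨max N 1, fun n hn => ?_⟩
  have hn1 : 1 ≤ n := le_trans (le_max_right N 1) hn
  have hnpos : (0 : ℝ) < n := by exact_mod_cast hn1
  have hfn : 0 < f (n : ℝ) := mod_pos' hf hnpos
  have hlt : f (S n) / f (n : ℝ) < (m : ℝ)⁻¹ := by
    have := hN n (le_trans (le_max_left N 1) hn)
    rw [Real.dist_eq, sub_zero,
      abs_of_nonneg (div_nonneg (mod_nonneg' hf (hS n)) hfn.le)] at this
    exact this
  have hSn : S n < ε * n := by
    by_contra hc
    push_neg at hc
    have hεn : (0 : ℝ) ≤ ε * n := by positivity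
    have h1 : f (ε * n) ≤ f (S n) := mod_mono' hf hεn hc
    have h2 : (n : ℝ) ≤ (m : ℝ) * (ε * n) := by
      have h2a := mul_le_mul_of_nonneg_right hmε hεn
      calc (n : ℝ) = (1 / ε) * (ε * n) := by field_simp
        _ ≤ (m : ℝ) * (ε * n) := h2a
    have h3 : f (n : ℝ) ≤ (m : ℝ) * f (ε * n) :=
      le_trans (mod_mono' hf hnpos.le h2) (mod_nsmul' hf m hεn)
    have h4 : f (n : ℝ) ≤ (m : ℝ) * f (S n) :=
      le_trans h3 (by nlinarith)
    have h5 : (m : ℝ)⁻¹ ≤ f (S n) / f (n : ℝ) := by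
      rw [inv_eq_one_div, div_le_div_iff₀ hm0 hfn]
      nlinarith
    linarith
  have : S n / (n : ℝ) < ε := by
    rw [div_lt_iff₀ hnpos]
    linarith [hSn]
  have hnn : 0 ≤ S n / (n : ℝ) := div_nonneg (hS n) hnpos.le
  rw [Real.dist_eq, sub_zero, abs_of_nonneg hnn]
  exact this

theorem wijsman_fcesaro_imp_fstat_and_unifInt {X : Type*} [MetricSpace X]
    (f : ℝ → ℝ) (hf : IsModulus f)
    (A : ℕ → Set X) (B : Set X)
    (hA : ∀ n, (A n).Nonempty ∧ IsClosed (A n)) (hB : B.Nonempty ∧ IsClosed B)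
    (h : WijsmanFStrongCesaro f A B) :
    WijsmanFStatConv f A B ∧ WijsmanUnifIntegrable A := by
  constructor
  · -- f-statistical convergence
    intro x ε hε
    have hx := h x
    unfold FStrongCesaro at hx
    set L := infDist x B with hL
    set S : ℕ → ℝ := fun n => ∑ j ∈ Finset.range n, |infDist x (A j) - L| with hSdef
    set c : ℕ → ℕ := fun n => ((Finset.range n).filter
      (fun j => ε < |infDist x (A j) - L|)).card with hcdef
    have hS0 : ∀ n, 0 ≤ S n := fun n => Finset.sum_nonneg fun j _ => abs_nonneg _
    set m : ℕ := ⌈1 / ε⌉₊ with hm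
    have hmε : 1 / ε ≤ (m : ℝ) := Nat.le_ceil _
    have hm0 : (0 : ℝ) ≤ m := Nat.cast_nonneg m
    have hcard : ∀ n, (c n : ℝ) * ε ≤ S n := by
      intro n
      have h1 : ((Finset.range n).filter
          (fun j => ε < |infDist x (A j) - L|)).card • ε ≤
          ∑ j ∈ (Finset.range n).filter (fun j => ε < |infDist x (A j) - L|),
            |infDist x (A j) - L| :=
        Finset.card_nsmul_le_sum _ _ _ (fun j hj => (Finset.mem_filter.mp hj).2.le)
      have h2 : ∑ j ∈ (Finset.range n).filter (fun j => ε < |infDist x (A j) - L|),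
          |infDist x (A j) - L| ≤ S n :=
        Finset.sum_le_sum_of_subset_of_nonneg (Finset.filter_subset _ _)
          (fun j _ _ => abs_nonneg _)
      calc (c n : ℝ) * ε = (c n) • ε := by simp [nsmul_eq_mul]
        _ ≤ _ := h1
        _ ≤ S n := h2
    have hcle : ∀ n, (c n : ℝ) ≤ (m : ℝ) * S n := by
      intro n
      have h1 : (c n : ℝ) ≤ S n * (1 / ε) := by
        rw [mul_one_div, le_div_iff₀ hε]
        exact hcard n
      calc (c n : ℝ) ≤ S n * (1 / ε) := h1
        _ ≤ S n * m := mul_le_mul_of_nonneg_left hmε (hS0 n)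
        _ = (m : ℝ) * S n := mul_comm _ _
    -- squeeze
    have hbound : ∀ᶠ n in Filter.atTop,
        f ((c n : ℝ)) / f (n : ℝ) ≤ (m : ℝ) * (f (S n) / f (n : ℝ)) := by
      filter_upwards [Filter.eventually_ge_atTop 1] with n hn
      have hnpos : (0 : ℝ) < n := by exact_mod_cast hn
      have hfn : 0 < f (n : ℝ) := mod_pos' hf hnpos
      have h1 : f ((c n : ℝ)) ≤ (m : ℝ) * f (S n) :=
        le_trans (mod_mono' hf (Nat.cast_nonneg _) (hcle n))
          (mod_nsmul' hf m (hS0 n))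
      calc f ((c n : ℝ)) / f (n : ℝ) ≤ ((m : ℝ) * f (S n)) / f (n : ℝ) := by gcongr
        _ = (m : ℝ) * (f (S n) / f (n : ℝ)) := by ring
    have hnonneg : ∀ᶠ n in Filter.atTop,
        (0 : ℝ) ≤ f ((c n : ℝ)) / f (n : ℝ) := by
      filter_upwards [Filter.eventually_ge_atTop 1] with n hn
      have hnpos : (0 : ℝ) < n := by exact_mod_cast hn
      exact div_nonneg (mod_nonneg' hf (Nat.cast_nonneg _)) (mod_nonneg' hf hnpos.le)
    have hlim : Filter.Tendsto (fun n : ℕ => (m : ℝ) * (f (S n) / f (n : ℝ)))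
        Filter.atTop (nhds 0) := by
      simpa using hx.const_mul (m : ℝ)
    exact squeeze_zero' hnonneg hbound hlim
  · -- uniform integrability
    intro x
    have hx := h x
    unfold FStrongCesaro at hx
    set L := infDist x B with hL
    set d : ℕ → ℝ := fun j => infDist x (A j) with hd
    have hd0 : ∀ j, 0 ≤ d j := fun j => infDist_nonneg
    set S : ℕ → ℝ := fun n => ∑ j ∈ Finset.range n, |d j - L| with hSdef
    have hS0 : ∀ n, 0 ≤ S n := fun n => Finset.sum_nonneg fun j _ => abs_nonneg _
    have hces : Filter.Tendsto (fun n : ℕ => S n / (n : ℝ)) Filter.atTop (nhds 0) :=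
      mod_cesaro_div hf hS0 hx
    have hL0 : 0 ≤ L := infDist_nonneg
    unfold UnifIntegrable
    rw [Metric.tendsto_atTop] at hces ⊢
    intro ε hε
    obtain ⟨N₀, hN₀⟩ := hces (ε / 4) (by positivity)
    set N : ℕ := max N₀ 1 with hNdef
    set C : ℝ := max (2 * L) (1 + ∑ j ∈ Finset.range N, d j) with hC
    refine ⟨C, fun c hc => ?_⟩
    have hc2L : 2 * L ≤ c := le_trans (le_max_left _ _) hc
    have hcbig : ∀ j < N, ¬ (c ≤ |d j|) := by
      intro j hj hcj
      rw [abs_of_nonneg (hd0 j)] at hcj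
      have h1 : d j ≤ ∑ i ∈ Finset.range N, d i :=
        Finset.single_le_sum (fun i _ => hd0 i) (Finset.mem_range.mpr hj)
      have h2 : 1 + ∑ i ∈ Finset.range N, d i ≤ c := le_trans (le_max_right _ _) hc
      linarith
    -- termwise bound for the truncated sum
    have hterm : ∀ j, (if c ≤ |d j| then |d j| else 0) ≤ 2 * |d j - L| := by
      intro j
      by_cases hj : c ≤ |d j|
      · rw [if_pos hj, abs_of_nonneg (hd0 j)]
        rw [abs_of_nonneg (hd0 j)] at hj
        have hdL : L ≤ d j / 2 := by linarith
        have : d j - L ≥ d j / 2 := by linarith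
        have habs : |d j - L| = d j - L := abs_of_nonneg (by linarith)
        linarith [habs]
      · rw [if_neg hj]
        positivity
    have hsup : ∀ n : ℕ,
        (∑ j ∈ Finset.range n, if c ≤ |d j| then |d j| else 0) / (n : ℝ) ≤ ε / 2 := by
      intro n
      by_cases hn : n < N
      · have hzero : (∑ j ∈ Finset.range n, if c ≤ |d j| then |d j| else 0) = 0 := by
          apply Finset.sum_eq_zero
          intro j hj
          rw [if_neg (hcbig j (lt_trans (Finset.mem_range.mp hj) hn))]
        rw [hzero, zero_div]
        positivity
      · push_neg at hn
        have hn1 : 1 ≤ n := le_trans (le_max_right N₀ 1) hn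
        have hnpos : (0 : ℝ) < n := by exact_mod_cast hn1
        have hsum : (∑ j ∈ Finset.range n, if c ≤ |d j| then |d j| else 0) ≤ 2 * S n := by
          rw [hSdef, Finset.mul_sum]
          exact Finset.sum_le_sum fun j _ => hterm j
        have hSn : S n / (n : ℝ) < ε / 4 := by
          have := hN₀ n (le_trans (le_max_left N₀ 1) hn)
          rw [Real.dist_eq, sub_zero, abs_of_nonneg (div_nonneg (hS0 n) hnpos.le)] at this
          exact this
        calc (∑ j ∈ Finset.range n, if c ≤ |d j| then |d j| else 0) / (n : ℝ)
            ≤ (2 * S n) / (n : ℝ) := by gcongr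
          _ = 2 * (S n / (n : ℝ)) := by ring
          _ ≤ ε / 2 := by linarith
    have hsupnn : (0 : ℝ) ≤ ⨆ n : ℕ,
        (∑ j ∈ Finset.range n, if c ≤ |d j| then |d j| else 0) / (n : ℝ) := by
      apply Real.iSup_nonneg
      intro n
      apply div_nonneg _ (Nat.cast_nonneg n)
      apply Finset.sum_nonneg
      intro j _
      split <;> positivity
    have hsuple : (⨆ n : ℕ,
        (∑ j ∈ Finset.range n, if c ≤ |d j| then |d j| else 0) / (n : ℝ)) ≤ ε / 2 :=
      Real.iSup_le hsup (by positivity)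
    rw [Real.dist_eq, sub_zero, abs_of_nonneg hsupnn]
    linarith
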